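/- The kernel g₂(P₂) of the symbol of the extended Rapcsák operator has dimension n(n+1)/2 + n(n−1); precisely, the subspace of symmetric bilinear forms A : V × V → ℝ satisfying A(X, C) = 0 for all X ∈ V and A(P_h X, J Y) = A(P_h Y, J X) for all X, Y ∈ V has dimension n(n+1)/2 + n(n−1). -/

import Mathlib

set_option synthInstance.maxHeartbeats 1000000
set_option maxHeartbeats 1000000

noncomputable section

/-- The pointwise model `V = (Fin n → ℝ) × (Fin n → ℝ)` of the double tangent space
`T_x(TM)` for a spray on an `n`-dimensional manifold, in an adapted basis. -/
abbrev V (n : ℕ) : Type := (Fin n → ℝ) × (Fin n → ℝ)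

/-- The vertical endomorphism `J (x, y) = (0, x)`. -/
def Jmap (n : ℕ) : V n →ₗ[ℝ] V n where
  toFun p := (0, p.1)
  map_add' a b := by simp
  map_smul' c a := by simp

/-- The horizontal projector `P_h (x, y) = (x, 0)`. -/
def Ph (n : ℕ) : V n →ₗ[ℝ] V n where
  toFun p := (p.1, 0)
  map_add' a b := by simp
  map_smul' c a := by simp

/-- The `j`-th standard basis vector of `Fin n → ℝ`, indexed by `1 ≤ j ≤ n`
(zero if `j` is out of range). -/
def dlt (n j : ℕ) : Fin n → ℝ := fun i => if (i : ℕ) + 1 = j then 1 else 0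

/-- The horizontal basis vector `h_j`, `1 ≤ j ≤ n`. -/
def hvec (n j : ℕ) : V n := (dlt n j, 0)

/-- The vertical basis vector `v_j`, `1 ≤ j ≤ n`. -/
def vvec (n j : ℕ) : V n := (0, dlt n j)

/-- The spray vector `S = h_n`. -/
def Svec (n : ℕ) : V n := hvec n n

/-- The Liouville vector `C = v_n = J S`. -/
def Cvec (n : ℕ) : V n := vvec n n

/-- Bilinear forms on `V n`. -/
abbrev Bil (n : ℕ) := V n →ₗ[ℝ] V n →ₗ[ℝ] ℝ

/-- Trilinear forms on `V n` (bundled). -/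
abbrev Tri (n : ℕ) := V n →ₗ[ℝ] V n →ₗ[ℝ] V n →ₗ[ℝ] ℝ

/-- The kernel `g₂(P₂)` of the symbol of the extended Rapcsák operator: symmetric
bilinear forms `A` on `V` with `A(X, C) = 0` and `A(P_h X, J Y) = A(P_h Y, J X)`. -/
def g2P2 (n : ℕ) : Submodule ℝ (Bil n) where
  carrier := {A | (∀ X Y, A X Y = A Y X) ∧ (∀ X, A X (Cvec n) = 0) ∧
    (∀ X Y, A (Ph n X) (Jmap n Y) = A (Ph n Y) (Jmap n X))}
  add_mem' := by
    rintro a b ⟨ha1, ha2, ha3⟩ ⟨hb1, hb2, hb3⟩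
    refine ⟨fun X Y => ?_, fun X => ?_, fun X Y => ?_⟩ <;>
      simp only [LinearMap.add_apply]
    · linear_combination ha1 X Y + hb1 X Y
    · linear_combination ha2 X + hb2 X
    · linear_combination ha3 X Y + hb3 X Y
  zero_mem' := ⟨fun X Y => by simp, fun X => by simp, fun X Y => by simp⟩
  smul_mem' := by
    rintro c a ⟨ha1, ha2, ha3⟩
    refine ⟨fun X Y => ?_, fun X => ?_, fun X Y => ?_⟩ <;>
      simp only [LinearMap.smul_apply, smul_eq_mul]
    · linear_combination c * ha1 X Y
    · linear_combination c * ha2 X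
    · linear_combination c * ha3 X Y

namespace G2Aux
variable {n : ℕ}
def ee (n : ℕ) (i : Fin n) : V n := (Pi.single i 1, 0)
def ff (n : ℕ) (i : Fin n) : V n := (0, Pi.single i 1)
def eφ (n : ℕ) (i : Fin n) : V n →ₗ[ℝ] ℝ := (LinearMap.proj i).comp (LinearMap.fst ℝ _ _)
def fφ (n : ℕ) (i : Fin n) : V n →ₗ[ℝ] ℝ := (LinearMap.proj i).comp (LinearMap.snd ℝ _ _)
def tens (φ ψ : V n →ₗ[ℝ] ℝ) : Bil n :=
  LinearMap.mk₂ ℝ (fun X Y => φ X * ψ Y)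
    (fun X X' Y => by simp [add_mul]) (fun c X Y => by simp [mul_assoc])
    (fun X Y Y' => by simp [mul_add]) (fun c X Y => by simp; ring)
@[simp] lemma tens_apply (φ ψ : V n →ₗ[ℝ] ℝ) (X Y : V n) : tens φ ψ X Y = φ X * ψ Y := rfl
def sym2 (φ ψ : V n →ₗ[ℝ] ℝ) : Bil n := tens φ ψ + tens ψ φ
@[simp] lemma sym2_apply (φ ψ : V n →ₗ[ℝ] ℝ) (X Y : V n) :
    sym2 φ ψ X Y = φ X * ψ Y + φ Y * ψ X := by simp [sym2]; ring
@[simp] lemma eφ_ee (i a : Fin n) : eφ n i (ee n a) = if i = a then 1 else 0 := by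
  simp [eφ, ee, Pi.single_apply]
@[simp] lemma eφ_ff (i a : Fin n) : eφ n i (ff n a) = 0 := rfl
@[simp] lemma fφ_ee (i a : Fin n) : fφ n i (ee n a) = 0 := rfl
@[simp] lemma fφ_ff (i a : Fin n) : fφ n i (ff n a) = if i = a then 1 else 0 := by
  simp [fφ, ff, Pi.single_apply]
@[simp] lemma eφ_C (i : Fin n) : eφ n i (Cvec n) = 0 := rfl
@[simp] lemma fφ_C (i : Fin n) : fφ n i (Cvec n) = if (i : ℕ) + 1 = n then 1 else 0 := rfl
@[simp] lemma eφ_Ph (i : Fin n) (X : V n) : eφ n i (Ph n X) = X.1 i := rfl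
@[simp] lemma fφ_Ph (i : Fin n) (X : V n) : fφ n i (Ph n X) = 0 := rfl
@[simp] lemma eφ_J (i : Fin n) (X : V n) : eφ n i (Jmap n X) = 0 := rfl
@[simp] lemma fφ_J (i : Fin n) (X : V n) : fφ n i (Jmap n X) = X.1 i := rfl


abbrev Idx (n : ℕ) : Type :=
  {p : Fin n × Fin n // p.1 ≤ p.2} ⊕ {p : Fin n × Fin n // p.1 ≤ p.2 ∧ (p.2 : ℕ) + 1 < n}
    ⊕ {p : Fin n × Fin n // p.1 ≤ p.2 ∧ (p.2 : ℕ) + 1 < n}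

def uvec (n : ℕ) : Idx n → V n × V n
  | .inl ⟨(i, j), _⟩ => (ee n i, ee n j)
  | .inr (.inl ⟨(i, j), _⟩) => (ee n i, ff n j)
  | .inr (.inr ⟨(i, j), _⟩) => (ff n i, ff n j)

def Bform (n : ℕ) : Idx n → Bil n
  | .inl ⟨(i, j), _⟩ => if i = j then tens (eφ n i) (eφ n i) else sym2 (eφ n i) (eφ n j)
  | .inr (.inl ⟨(i, j), _⟩) =>
      if i = j then sym2 (eφ n i) (fφ n i)
      else sym2 (eφ n i) (fφ n j) + sym2 (eφ n j) (fφ n i)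
  | .inr (.inr ⟨(i, j), _⟩) => if i = j then tens (fφ n i) (fφ n i) else sym2 (fφ n i) (fφ n j)

lemma Bform_mem (idx : Idx n) : Bform n idx ∈ g2P2 n := by
  rcases idx with ⟨⟨i, j⟩, hij⟩ | ⟨⟨i, j⟩, hij⟩ | ⟨⟨i, j⟩, hij⟩
  · refine ⟨fun X Y => ?_, fun X => ?_, fun X Y => ?_⟩ <;>
      by_cases h : i = j <;> simp [Bform, h] <;> ring
  · obtain ⟨h1, h2⟩ := hij
    have h1' : (i : ℕ) ≤ (j : ℕ) := h1
    have h2' : (j : ℕ) + 1 < n := h2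
    refine ⟨fun X Y => ?_, fun X => ?_, fun X Y => ?_⟩ <;>
      by_cases h : i = j <;>
      simp [Bform, h, show ¬(1 + (j : ℕ) = n) by omega, show ¬(1 + (i : ℕ) = n) by omega,
        show ¬((j : ℕ) + 1 = n) by omega, show ¬((i : ℕ) + 1 = n) by omega] <;>
      first | ring | (intro h'; omega)
  · obtain ⟨h1, h2⟩ := hij
    have h1' : (i : ℕ) ≤ (j : ℕ) := h1
    have h2' : (j : ℕ) + 1 < n := h2
    refine ⟨fun X Y => ?_, fun X => ?_, fun X Y => ?_⟩ <;>
      by_cases h : i = j <;>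
      simp [Bform, h, show ¬(1 + (j : ℕ) = n) by omega, show ¬(1 + (i : ℕ) = n) by omega,
        show ¬((j : ℕ) + 1 = n) by omega, show ¬((i : ℕ) + 1 = n) by omega] <;>
      first | ring | (intro h'; omega)

def Bform' (n : ℕ) (idx : Idx n) : g2P2 n := ⟨Bform n idx, Bform_mem idx⟩

def Fmap (n : ℕ) : Bil n →ₗ[ℝ] (Idx n → ℝ) where
  toFun A := fun idx => A (uvec n idx).1 (uvec n idx).2
  map_add' A B := by funext idx; simp
  map_smul' c A := by funext idx; simp

def FmapS (n : ℕ) : g2P2 n →ₗ[ℝ] (Idx n → ℝ) := (Fmap n).comp (g2P2 n).subtype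

def Gmap (n : ℕ) : (Idx n → ℝ) →ₗ[ℝ] g2P2 n :=
  ∑ idx : Idx n, (LinearMap.proj idx).smulRight (Bform' n idx)

lemma Gmap_apply (c : Idx n → ℝ) (X Y : V n) :
    ((Gmap n c : g2P2 n) : Bil n) X Y = ∑ idx : Idx n, c idx * Bform n idx X Y := by
  simp [Gmap, Submodule.coe_sum, Bform', LinearMap.sum_apply]

lemma Bform_delta (idx idx' : Idx n) :
    Bform n idx (uvec n idx').1 (uvec n idx').2 = if idx = idx' then 1 else 0 := by
  rcases idx with ⟨⟨i, j⟩, hij⟩ | ⟨⟨i, j⟩, hij⟩ | ⟨⟨i, j⟩, hij⟩ <;>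
    rcases idx' with ⟨⟨a, b⟩, hab⟩ | ⟨⟨a, b⟩, hab⟩ | ⟨⟨a, b⟩, hab⟩ <;>
    simp only [Bform, uvec, Sum.inl.injEq, Sum.inr.injEq, Subtype.mk.injEq, Prod.mk.injEq,
      reduceCtorEq, if_false, if_true] <;>
    by_cases h : i = j <;>
    simp only [h, if_true, if_false, sym2_apply, tens_apply, LinearMap.add_apply,
      eφ_ee, eφ_ff, fφ_ee, fφ_ff, mul_zero, zero_mul, add_zero, zero_add, if_pos, if_neg] <;>
    simp only [Fin.le_def, Fin.ext_iff, not_and] at * <;>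
    split_ifs <;> simp_all <;> omega

lemma FG (c : Idx n → ℝ) : FmapS n (Gmap n c) = c := by
  funext idx
  simp only [FmapS, LinearMap.comp_apply, Fmap, Submodule.coe_subtype, LinearMap.coe_mk,
    AddHom.coe_mk]
  rw [Gmap_apply]
  simp only [Bform_delta, mul_ite, mul_one, mul_zero]
  simp


def bV (n : ℕ) : Module.Basis (Fin n ⊕ Fin n) ℝ (V n) :=
  (Pi.basisFun ℝ (Fin n)).prod (Pi.basisFun ℝ (Fin n))

def eb (n : ℕ) : Fin n ⊕ Fin n → V n := Sum.elim (ee n) (ff n)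

lemma bV_eq (s : Fin n ⊕ Fin n) : bV n s = eb n s := by
  rcases s with i | i <;> refine Prod.ext ?_ ?_ <;>
    simp [bV, eb, ee, ff, Module.Basis.prod_apply_inl_fst, Module.Basis.prod_apply_inl_snd,
      Module.Basis.prod_apply_inr_fst, Module.Basis.prod_apply_inr_snd, Pi.basisFun_apply]

lemma ff_last {a : Fin n} (ha : (a : ℕ) + 1 = n) : ff n a = Cvec n := by
  refine Prod.ext rfl ?_
  funext k
  have hk : (k = a) ↔ ((k : ℕ) + 1 = n) := by
    rw [Fin.ext_iff]; omega
  simp [ff, Cvec, vvec, dlt, Pi.single_apply, hk]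

lemma FmapS_zero (B : g2P2 n) (hB : FmapS n B = 0) : B = 0 := by
  obtain ⟨hB1, hB2, hB3⟩ := B.2
  have h0 : ∀ idx : Idx n, (B : Bil n) (uvec n idx).1 (uvec n idx).2 = 0 := fun idx =>
    congrFun hB idx
  have hB3' : ∀ a b : Fin n, (B : Bil n) (ee n a) (ff n b) = (B : Bil n) (ee n b) (ff n a) :=
    fun a b => hB3 (ee n a) (ee n b)
  have hCf : ∀ (X : V n) (a : Fin n), (a : ℕ) + 1 = n → (B : Bil n) X (ff n a) = 0 :=
    fun X a ha => by rw [ff_last ha]; exact hB2 X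
  have mixed : ∀ a b : Fin n, (B : Bil n) (ee n a) (ff n b) = 0 := by
    intro a b
    by_cases hb : (b : ℕ) + 1 < n
    · rcases le_total a b with hab | hab
      · exact h0 (.inr (.inl ⟨(a, b), hab, hb⟩))
      · rw [hB3']
        by_cases ha : (a : ℕ) + 1 < n
        · exact h0 (.inr (.inl ⟨(b, a), hab, ha⟩))
        · exact hCf _ _ (by have := a.2; omega)
    · exact hCf _ _ (by have := b.2; omega)
  apply Subtype.ext
  apply LinearMap.ext_basis (bV n) (bV n)
  intro s t
  rw [bV_eq, bV_eq]
  have hz : ((0 : g2P2 n) : Bil n) (eb n s) (eb n t) = 0 := rfl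
  rw [hz]
  rcases s with a | a <;> rcases t with b | b
  · rcases le_total a b with hab | hab
    · exact h0 (.inl ⟨(a, b), hab⟩)
    · rw [hB1]; exact h0 (.inl ⟨(b, a), hab⟩)
  · exact mixed a b
  · rw [hB1]; exact mixed b a
  · by_cases hb : (b : ℕ) + 1 < n
    · rcases le_total a b with hab | hab
      · exact h0 (.inr (.inr ⟨(a, b), hab, hb⟩))
      · rw [hB1]
        by_cases ha : (a : ℕ) + 1 < n
        · exact h0 (.inr (.inr ⟨(b, a), hab, ha⟩))
        · exact hCf _ _ (by have := a.2; omega)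
    · exact hCf _ _ (by have := b.2; omega)

lemma FmapS_inj : Function.Injective (FmapS n) := by
  intro B B' h
  have hmem : (B : Bil n) - (B' : Bil n) ∈ g2P2 n := by
    have h2 := (g2P2 n).add_mem B.2 ((g2P2 n).smul_mem (-1) B'.2)
    convert h2 using 1
    refine LinearMap.ext fun X => LinearMap.ext fun Y => ?_
    simp [sub_eq_add_neg]
  have hcoord : FmapS n ⟨(B : Bil n) - (B' : Bil n), hmem⟩ = 0 := by
    funext idx
    show ((B : Bil n) - (B' : Bil n)) (uvec n idx).1 (uvec n idx).2 = 0
    have h' : (B : Bil n) (uvec n idx).1 (uvec n idx).2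
        = (B' : Bil n) (uvec n idx).1 (uvec n idx).2 := congrFun h idx
    simp [LinearMap.sub_apply, h']
  have hz := FmapS_zero _ hcoord
  have hsub : (B : Bil n) - (B' : Bil n) = 0 := congrArg Subtype.val hz
  exact Subtype.ext (sub_eq_zero.mp hsub)

def equivG (n : ℕ) : g2P2 n ≃ₗ[ℝ] (Idx n → ℝ) :=
  LinearEquiv.ofBijective (FmapS n) ⟨FmapS_inj, fun c => ⟨Gmap n c, FG c⟩⟩

def e2 (m : ℕ) :
    {p : Fin (m + 1) × Fin (m + 1) // p.1 ≤ p.2 ∧ (p.2 : ℕ) + 1 < m + 1} ≃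
      {p : Fin m × Fin m // p.1 ≤ p.2} where
  toFun x :=
    ⟨(⟨x.1.1.1, by
        have h1 : (x.1.1.1 : ℕ) ≤ x.1.2.1 := x.2.1
        have h2 : (x.1.2.1 : ℕ) + 1 < m + 1 := x.2.2
        omega⟩,
      ⟨x.1.2.1, by
        have h2 : (x.1.2.1 : ℕ) + 1 < m + 1 := x.2.2
        omega⟩), x.2.1⟩
  invFun x :=
    ⟨(⟨x.1.1.1, by have := x.1.1.2; omega⟩, ⟨x.1.2.1, by have := x.1.2.2; omega⟩),
      x.2, Nat.succ_lt_succ x.1.2.2⟩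
  left_inv x := rfl
  right_inv x := rfl

lemma card_le (m : ℕ) :
    Fintype.card {p : Fin m × Fin m // p.1 ≤ p.2} = m * (m + 1) / 2 := by
  rw [← Fintype.card_congr (Sym2.sortEquiv (α := Fin m))]
  rw [Sym2.card]
  simp [Nat.choose_two_right, Fintype.card_fin, Nat.mul_comm]

lemma card_idx (m : ℕ) :
    Fintype.card (Idx (m + 1)) =
      (m + 1) * (m + 1 + 1) / 2 + (m * (m + 1) / 2 + m * (m + 1) / 2) := by
  rw [Fintype.card_sum, Fintype.card_sum]
  rw [card_le (m + 1), Fintype.card_congr (e2 m), card_le m]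

set_option maxHeartbeats 2000000 in
lemma finrank_eq_card (m : ℕ) :
    Module.finrank ℝ (g2P2 (m + 1)) =
      (m + 1) * (m + 1 + 1) / 2 + (m * (m + 1) / 2 + m * (m + 1) / 2) := by
  rw [(equivG (m + 1)).finrank_eq, Module.finrank_fintype_fun_eq_card, card_idx m]

end G2Aux


/-- the kernel `g₂(P₂)` of the symbol of the extended Rapcsák operator
has dimension `n(n+1)/2 + n(n−1)`. -/
theorem dim_g2P2 (n : ℕ) (hn : 1 ≤ n) :
    Module.finrank ℝ (g2P2 n) = n * (n + 1) / 2 + n * (n - 1) := by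
  rcases n with _ | m
  · exact absurd hn (by omega)
  rw [G2Aux.finrank_eq_card m]
  simp only [Nat.add_sub_cancel]
  obtain ⟨a, ha⟩ := Nat.even_mul_succ_self m
  obtain ⟨b, hb⟩ := Nat.even_mul_succ_self (m + 1)
  have hc : (m + 1) * m = a + a := by rw [Nat.mul_comm]; exact ha
  rw [ha, hb, hc]
  omega
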